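/- The matrix F₃ = [[0,0,1],[0,1,1],[1,1,1]] over ℤ/2ℤ has multiplicative order 7, and for each j = 1,…,6, the matrix F₃ʲ - E is invertible over ℤ/2ʳℤ for every r ≥ 1 (equivalently, F₃ʲ has no nonzero fixed vector in (ℤ/2ʳℤ)³). -/

import Mathlib

private lemma unitZMod (r : ℕ) (d : ℕ) (hd : Nat.Coprime d 2) :
    IsUnit ((d : ZMod (2 ^ r))) := by
  rw [ZMod.isUnit_iff_coprime]
  exact hd.pow_right r

private lemma unitCast (r : ℕ) (d : ℕ) (hd : Nat.Coprime d 2) :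
    IsUnit ((Int.castRingHom (ZMod (2 ^ r))) (d : ℤ)) := by
  simpa using unitZMod r d hd

private lemma baseMap (r : ℕ) :
    (Int.castRingHom (ZMod (2 ^ r))).mapMatrix
        (!![0, 0, 1; 0, 1, 1; 1, 1, 1] : Matrix (Fin 3) (Fin 3) ℤ)
      = (!![0, 0, 1; 0, 1, 1; 1, 1, 1] : Matrix (Fin 3) (Fin 3) (ZMod (2 ^ r))) := by
  ext i k
  fin_cases i <;> fin_cases k <;>
    simp [Matrix.vecHead, Matrix.vecTail]

private lemma detCast (r j : ℕ) :
    ((!![0, 0, 1; 0, 1, 1; 1, 1, 1] : Matrix (Fin 3) (Fin 3) (ZMod (2 ^ r))) ^ j - 1)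
      = (Int.castRingHom (ZMod (2 ^ r))).mapMatrix
          ((!![0, 0, 1; 0, 1, 1; 1, 1, 1] : Matrix (Fin 3) (Fin 3) ℤ) ^ j - 1) := by
  rw [map_sub, map_pow, map_one, baseMap]

private lemma detVal (j : ℕ) (hj1 : 1 ≤ j) (hj6 : j ≤ 6) :
    ∃ d : ℕ, Nat.Coprime d 2 ∧
      ((!![0, 0, 1; 0, 1, 1; 1, 1, 1] : Matrix (Fin 3) (Fin 3) ℤ) ^ j - 1).det = (d : ℤ) := by
  interval_cases j
  · exact ⟨1, by decide, by
      norm_num [pow_succ, Matrix.mul_fin_three, Matrix.one_fin_three, Matrix.det_fin_three,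
        Matrix.sub_apply, Matrix.vecHead, Matrix.vecTail, Matrix.cons_val_two, Matrix.cons_val_one,
        Matrix.cons_val_zero]⟩
  · exact ⟨1, by decide, by
      norm_num [pow_succ, Matrix.mul_fin_three, Matrix.one_fin_three, Matrix.det_fin_three,
        Matrix.sub_apply, Matrix.vecHead, Matrix.vecTail, Matrix.cons_val_two, Matrix.cons_val_one,
        Matrix.cons_val_zero]⟩
  · exact ⟨13, by decide, by
      norm_num [pow_succ, Matrix.mul_fin_three, Matrix.one_fin_three, Matrix.det_fin_three,
        Matrix.sub_apply, Matrix.vecHead, Matrix.vecTail, Matrix.cons_val_two, Matrix.cons_val_one,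
        Matrix.cons_val_zero]⟩
  · exact ⟨13, by decide, by
      norm_num [pow_succ, Matrix.mul_fin_three, Matrix.one_fin_three, Matrix.det_fin_three,
        Matrix.sub_apply, Matrix.vecHead, Matrix.vecTail, Matrix.cons_val_two, Matrix.cons_val_one,
        Matrix.cons_val_zero]⟩
  · exact ⟨71, by decide, by
      norm_num [pow_succ, Matrix.mul_fin_three, Matrix.one_fin_three, Matrix.det_fin_three,
        Matrix.sub_apply, Matrix.vecHead, Matrix.vecTail, Matrix.cons_val_two, Matrix.cons_val_one,
        Matrix.cons_val_zero]⟩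
  · exact ⟨91, by decide, by
      norm_num [pow_succ, Matrix.mul_fin_three, Matrix.one_fin_three, Matrix.det_fin_three,
        Matrix.sub_apply, Matrix.vecHead, Matrix.vecTail, Matrix.cons_val_two, Matrix.cons_val_one,
        Matrix.cons_val_zero]⟩

theorem stmt17 (F₃ : Matrix (Fin 3) (Fin 3) (ZMod 2))
    (hF : F₃ = !![0, 0, 1; 0, 1, 1; 1, 1, 1]) :
    orderOf F₃ = 7 ∧
    ∀ j : ℕ, 1 ≤ j → j ≤ 6 → ∀ r : ℕ, 1 ≤ r →
      IsUnit ((!![0, 0, 1; 0, 1, 1; 1, 1, 1] : Matrix (Fin 3) (Fin 3) (ZMod (2 ^ r))) ^ j - 1) ∧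
      ∀ v : Fin 3 → ZMod (2 ^ r),
        ((!![0, 0, 1; 0, 1, 1; 1, 1, 1] : Matrix (Fin 3) (Fin 3) (ZMod (2 ^ r))) ^ j).mulVec v = v
          → v = 0 := by
  subst hF
  constructor
  · haveI : Fact (Nat.Prime 7) := ⟨by norm_num⟩
    exact orderOf_eq_prime (by decide) (by decide)
  · intro j hj1 hj6 r hr
    set A : Matrix (Fin 3) (Fin 3) (ZMod (2 ^ r)) :=
      (!![0, 0, 1; 0, 1, 1; 1, 1, 1] : Matrix (Fin 3) (Fin 3) (ZMod (2 ^ r))) ^ j - 1 with hA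
    have keyd : IsUnit A.det := by
      obtain ⟨d, hd, hdet⟩ := detVal j hj1 hj6
      rw [hA, detCast, ← RingHom.map_det, hdet]
      exact unitCast r d hd
    have key : IsUnit A := (Matrix.isUnit_iff_isUnit_det A).mpr keyd
    refine ⟨key, fun v hv => ?_⟩
    have h0 : A.mulVec v = 0 := by
      rw [hA, Matrix.sub_mulVec, hv, Matrix.one_mulVec, sub_self]
    have h1 : A⁻¹ * A = 1 := Matrix.nonsing_inv_mul A keyd
    calc v = (1 : Matrix (Fin 3) (Fin 3) (ZMod (2 ^ r))).mulVec v := (Matrix.one_mulVec v).symm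
      _ = (A⁻¹ * A).mulVec v := by rw [h1]
      _ = A⁻¹.mulVec (A.mulVec v) := (Matrix.mulVec_mulVec v _ _).symm
      _ = A⁻¹.mulVec 0 := by rw [h0]
      _ = 0 := Matrix.mulVec_zero _
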